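/- Let G be a finite directed graph and define the p-vector y by y_i = number of incoming directed spanning trees of G rooted at v_i. Then L_2 y = 0, where L_2 = D_out - A_v^T. -/

import Mathlib

open Matrix

variable {p q : ℕ}

/-- In-incidence matrix: `[N_in]_{ki} = 1` iff edge `k` points to vertex `i`. -/
def Nin (tgt : Fin q → Fin p) : Matrix (Fin q) (Fin p) ℝ :=
  Matrix.of fun k i => if tgt k = i then (1 : ℝ) else 0

/-- Out-incidence matrix: `[M_out]_{ik} = 1` iff edge `k` points from vertex `i`. -/
def Mout (src : Fin q → Fin p) : Matrix (Fin p) (Fin q) ℝ :=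
  Matrix.of fun i k => if src k = i then (1 : ℝ) else 0

/-- Diagonal in-degree matrix. -/
def Din (tgt : Fin q → Fin p) : Matrix (Fin p) (Fin p) ℝ :=
  Matrix.diagonal fun i => (Fintype.card {k : Fin q // tgt k = i} : ℝ)

/-- Diagonal out-degree matrix. -/
def Dout (src : Fin q → Fin p) : Matrix (Fin p) (Fin p) ℝ :=
  Matrix.diagonal fun i => (Fintype.card {k : Fin q // src k = i} : ℝ)

/-- Vertex-adjacency matrix: `[A_v]_{ij} = 1` iff there is an edge from `i` to `j`. -/
def Av (src tgt : Fin q → Fin p) : Matrix (Fin p) (Fin p) ℝ :=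
  Matrix.of fun i j => if ∃ k, src k = i ∧ tgt k = j then (1 : ℝ) else 0

/-- `S` is the edge set of an outgoing directed spanning tree rooted at `r`:
every non-root vertex has in-degree `1` in `S`, the root has in-degree `0`,
and there are no directed cycles among the edges of `S`. -/
def IsOutTree (src tgt : Fin q → Fin p) (r : Fin p) (S : Finset (Fin q)) : Prop :=
  (∀ i, i ≠ r → ∃! k, k ∈ S ∧ tgt k = i) ∧
  (∀ k ∈ S, tgt k ≠ r) ∧
  (∀ i, ¬ Relation.TransGen (fun a b => ∃ k ∈ S, src k = a ∧ tgt k = b) i i)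

/-- `S` is the edge set of an incoming directed spanning tree rooted at `r`:
every non-root vertex has out-degree `1` in `S`, the root has out-degree `0`,
and there are no directed cycles among the edges of `S`. -/
def IsInTree (src tgt : Fin q → Fin p) (r : Fin p) (S : Finset (Fin q)) : Prop :=
  (∀ i, i ≠ r → ∃! k, k ∈ S ∧ src k = i) ∧
  (∀ k ∈ S, src k ≠ r) ∧
  (∀ i, ¬ Relation.TransGen (fun a b => ∃ k ∈ S, src k = a ∧ tgt k = b) i i)

namespace LapAux

variable {p q : ℕ} (src tgt : Fin q → Fin p)

def step (S : Finset (Fin q)) (a b : Fin p) : Prop := ∃ k ∈ S, src k = a ∧ tgt k = b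

def Good (i : Fin p) (S : Finset (Fin q)) : Prop :=
  (∀ v, ∃! k, k ∈ S ∧ src k = v) ∧ (∀ v, Relation.ReflTransGen (step src tgt S) v i)

variable {src tgt}

theorem step_mono {S T : Finset (Fin q)} (h : S ⊆ T) {a b : Fin p} :
    step src tgt S a b → step src tgt T a b := fun ⟨k, hk, h1, h2⟩ => ⟨k, h hk, h1, h2⟩

theorem tree_acyclic {r : Fin p} {T : Finset (Fin q)} (hT : IsInTree src tgt r T) (i : Fin p) :
    ¬ Relation.TransGen (step src tgt T) i i := hT.2.2 i

/-- every vertex reaches the root in an in-tree -/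
theorem tree_reach {r : Fin p} {T : Finset (Fin q)} (hT : IsInTree src tgt r T) (v : Fin p) :
    Relation.ReflTransGen (step src tgt T) v r := by
  have ht : IsTrans (Fin p) (fun a b => Relation.TransGen (step src tgt T) b a) :=
    ⟨fun a b c h1 h2 => h2.trans h1⟩
  have hi : IsIrrefl (Fin p) (fun a b => Relation.TransGen (step src tgt T) b a) :=
    ⟨fun a h => hT.2.2 a h⟩
  have hwf := Finite.wellFounded_of_trans_of_irrefl
      (fun a b : Fin p => Relation.TransGen (step src tgt T) b a)
  refine hwf.induction (C := fun v => Relation.ReflTransGen (step src tgt T) v r) v ?_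
  intro v IH
  by_cases hv : v = r
  · exact hv ▸ Relation.ReflTransGen.refl
  · obtain ⟨k, ⟨hkT, hks⟩, -⟩ := hT.1 v hv
    have hstep : step src tgt T v (tgt k) := ⟨k, hkT, hks, rfl⟩
    exact Relation.ReflTransGen.head hstep (IH (tgt k) (Relation.TransGen.single hstep))

/-- key anti-cycle lemma -/
theorem no_cycle {r r' : Fin p → Fin p → Prop} {j : Fin p}
    (det : ∀ a b c, r a b → r a c → b = c)
    (sub : ∀ a b, r' a b → r a b ∧ a ≠ j) {v : Fin p}
    (hreach : Relation.ReflTransGen r v j) : ¬ Relation.TransGen r' v v := by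
  induction hreach using Relation.ReflTransGen.head_induction_on with
  | refl =>
    intro hc
    obtain ⟨u, hju, -⟩ := Relation.TransGen.head'_iff.1 hc
    exact (sub _ _ hju).2 rfl
  | head hvw _hwj IH =>
    rename_i v w
    intro hc
    obtain ⟨u, hvu, huv⟩ := Relation.TransGen.head'_iff.1 hc
    have huw : u = w := det _ _ _ (sub _ _ hvu).1 hvw
    exact IH (Relation.TransGen.tail' (huw ▸ huv) (huw ▸ hvu))

theorem good_det {i : Fin p} {S : Finset (Fin q)} (hG : Good src tgt i S) {a b c : Fin p}
    (h1 : step src tgt S a b) (h2 : step src tgt S a c) : b = c := by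
  obtain ⟨k1, hk1, hs1, ht1⟩ := h1
  obtain ⟨k2, hk2, hs2, ht2⟩ := h2
  have : k1 = k2 := (hG.1 a).unique ⟨hk1, hs1⟩ ⟨hk2, hs2⟩
  rw [← ht1, ← ht2, this]

noncomputable def fnext {S : Finset (Fin q)} (h1 : ∀ v, ∃! k, k ∈ S ∧ src k = v) (v : Fin p) :
    Fin q := (h1 v).exists.choose

theorem fnext_mem {S : Finset (Fin q)} (h1 : ∀ v, ∃! k, k ∈ S ∧ src k = v) (v : Fin p) :
    fnext h1 v ∈ S := (h1 v).exists.choose_spec.1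

theorem fnext_src {S : Finset (Fin q)} (h1 : ∀ v, ∃! k, k ∈ S ∧ src k = v) (v : Fin p) :
    src (fnext h1 v) = v := (h1 v).exists.choose_spec.2

noncomputable def fstep {S : Finset (Fin q)} (h1 : ∀ v, ∃! k, k ∈ S ∧ src k = v) (v : Fin p) :
    Fin p := tgt (fnext h1 v)

theorem step_fstep {S : Finset (Fin q)} (h1 : ∀ v, ∃! k, k ∈ S ∧ src k = v) {a b : Fin p}
    (h : step src tgt S a b) : fstep (tgt := tgt) h1 a = b := by
  obtain ⟨k, hk, hs, ht⟩ := h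
  have : k = fnext h1 a := (h1 a).unique ⟨hk, hs⟩ ⟨fnext_mem h1 a, fnext_src h1 a⟩
  rw [fstep, ← this, ht]

theorem reach_iterate {S : Finset (Fin q)} (h1 : ∀ v, ∃! k, k ∈ S ∧ src k = v) {a b : Fin p}
    (h : Relation.ReflTransGen (step src tgt S) a b) :
    ∃ n, (fstep (tgt := tgt) h1)^[n] a = b := by
  induction h using Relation.ReflTransGen.head_induction_on with
  | refl => exact ⟨0, rfl⟩
  | head hac _ IH =>
    obtain ⟨n, hn⟩ := IH
    exact ⟨n + 1, by rw [Function.iterate_succ_apply, step_fstep h1 hac, hn]⟩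

theorem good_insert_left {i : Fin p} {k : Fin q} {T : Finset (Fin q)} (hk : src k = i)
    (hT : IsInTree src tgt i T) : Good src tgt i (insert k T) := by
  constructor
  · intro v
    by_cases hv : v = i
    · subst hv
      refine ⟨k, ⟨Finset.mem_insert_self _ _, hk⟩, ?_⟩
      rintro k' ⟨hk', hs'⟩
      rcases Finset.mem_insert.1 hk' with h | h
      · exact h
      · exact absurd hs' (hT.2.1 k' h)
    · obtain ⟨k0, ⟨hk0, hs0⟩, hu0⟩ := hT.1 v hv
      refine ⟨k0, ⟨Finset.mem_insert_of_mem hk0, hs0⟩, ?_⟩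
      rintro k' ⟨hk', hs'⟩
      rcases Finset.mem_insert.1 hk' with h | h
      · exact absurd (h ▸ hs') (by rw [hk]; exact fun hh => hv hh.symm)
      · exact hu0 k' ⟨h, hs'⟩
  · intro v
    exact Relation.ReflTransGen.mono (fun a b => step_mono (Finset.subset_insert _ _)) _ _ (tree_reach hT v)

theorem good_insert_right {i : Fin p} {k : Fin q} {T : Finset (Fin q)} (hk : tgt k = i)
    (hT : IsInTree src tgt (src k) T) : Good src tgt i (insert k T) := by
  constructor
  · intro v
    by_cases hv : v = src k
    · subst hv
      refine ⟨k, ⟨Finset.mem_insert_self _ _, rfl⟩, ?_⟩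
      rintro k' ⟨hk', hs'⟩
      rcases Finset.mem_insert.1 hk' with h | h
      · exact h
      · exact absurd hs' (hT.2.1 k' h)
    · obtain ⟨k0, ⟨hk0, hs0⟩, hu0⟩ := hT.1 v hv
      refine ⟨k0, ⟨Finset.mem_insert_of_mem hk0, hs0⟩, ?_⟩
      rintro k' ⟨hk', hs'⟩
      rcases Finset.mem_insert.1 hk' with h | h
      · subst h; exact absurd hs' fun hh => hv hh.symm
      · exact hu0 k' ⟨h, hs'⟩
  · intro v
    have h1 : Relation.ReflTransGen (step src tgt (insert k T)) v (src k) :=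
      Relation.ReflTransGen.mono (fun a b => step_mono (Finset.subset_insert _ _)) _ _ (tree_reach hT v)
    exact h1.tail ⟨k, Finset.mem_insert_self _ _, rfl, hk⟩

theorem erase_tree {i : Fin p} {S : Finset (Fin q)} (hG : Good src tgt i S) {k : Fin q}
    (hkS : k ∈ S) (hreach : Relation.ReflTransGen (step src tgt S) i (src k)) :
    IsInTree src tgt (src k) (S.erase k) := by
  have honly : ∀ e ∈ S.erase k, src e ≠ src k := by
    intro e he hs
    exact (Finset.mem_erase.1 he).1 ((hG.1 (src k)).unique ⟨(Finset.mem_erase.1 he).2, hs⟩ ⟨hkS, rfl⟩)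
  refine ⟨?_, honly, ?_⟩
  · intro v hv
    obtain ⟨e, ⟨heS, hes⟩, heu⟩ := hG.1 v
    have : e ≠ k := fun h => hv (by rw [← hes, h])
    refine ⟨e, ⟨Finset.mem_erase.2 ⟨this, heS⟩, hes⟩, ?_⟩
    rintro e' ⟨he', hs'⟩
    exact heu e' ⟨(Finset.mem_erase.1 he').2, hs'⟩
  · intro v
    refine no_cycle (r := step src tgt S) (fun a b c => good_det hG) ?_ ((hG.2 v).trans hreach)
    intro a b hab
    refine ⟨step_mono (Finset.erase_subset _ _) hab, ?_⟩
    obtain ⟨e, he, hs, -⟩ := hab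
    exact fun h => honly e he (h ▸ hs)

theorem bij_left (i : Fin p) :
    Function.Bijective
      (fun x : {k : Fin q // src k = i} × {T : Finset (Fin q) // IsInTree src tgt i T} =>
      (⟨insert x.1.1 x.2.1, good_insert_left x.1.2 x.2.2⟩ :
        {S : Finset (Fin q) // Good src tgt i S})) := by
  constructor
  · rintro ⟨⟨k, hk⟩, ⟨T, hT⟩⟩ ⟨⟨k', hk'⟩, ⟨T', hT'⟩⟩ h
    simp only [Subtype.mk.injEq] at h
    have hkk : k = k' := by
      have hmem : k' ∈ insert k T := h ▸ Finset.mem_insert_self k' T'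
      rcases Finset.mem_insert.1 hmem with h1 | h1
      · exact h1.symm
      · exact absurd hk' (hT.2.1 k' h1)
    subst hkk
    have hknT : k ∉ T := fun hmem => hT.2.1 k hmem hk
    have hknT' : k ∉ T' := fun hmem => hT'.2.1 k hmem hk'
    have hTT : T = T' := by
      rw [← Finset.erase_insert hknT, ← Finset.erase_insert hknT', h]
    simp [hTT]
  · rintro ⟨S, hG⟩
    have hsrc : src (fnext hG.1 i) = i := fnext_src hG.1 i
    have hmem : fnext hG.1 i ∈ S := fnext_mem hG.1 i
    have htree : IsInTree src tgt i (S.erase (fnext hG.1 i)) := by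
      have := erase_tree hG hmem (by rw [hsrc])
      rwa [hsrc] at this
    exact ⟨⟨⟨fnext hG.1 i, hsrc⟩, ⟨S.erase (fnext hG.1 i), htree⟩⟩, by
      simp [Finset.insert_erase hmem]⟩

theorem bij_right (i : Fin p) :
    Function.Bijective
      (fun x : Σ _k : {k : Fin q // tgt k = i},
          {T : Finset (Fin q) // IsInTree src tgt (src _k.1) T} =>
      (⟨insert x.1.1 x.2.1, good_insert_right x.1.2 x.2.2⟩ :
        {S : Finset (Fin q) // Good src tgt i S})) := by
  constructor
  · rintro ⟨⟨k, hk⟩, ⟨T, hT⟩⟩ ⟨⟨k', hk'⟩, ⟨T', hT'⟩⟩ h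
    simp only [Subtype.mk.injEq] at h
    have hkk : k = k' := by
      -- both produce the same Good set S
      have hG : Good src tgt i (insert k T) := good_insert_right hk hT
      set S := insert k T with hSdef
      have hS' : S = insert k' T' := h
      have hkS : k ∈ S := Finset.mem_insert_self _ _
      have hk'S : k' ∈ S := hS' ▸ Finset.mem_insert_self _ _
      -- reach from i to src k and src k'
      have r1 : Relation.ReflTransGen (step src tgt S) i (src k) :=
        Relation.ReflTransGen.mono (fun a b => step_mono (Finset.subset_insert _ _)) _ _ (tree_reach hT i)
      have r2 : Relation.ReflTransGen (step src tgt S) i (src k') :=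
        Relation.ReflTransGen.mono (fun a b =>
          step_mono (by rw [hS']; exact Finset.subset_insert _ _)) _ _ (tree_reach hT' i)
      set F := fstep (tgt := tgt) hG.1 with hF
      have Fk : F (src k) = i := step_fstep hG.1 ⟨k, hkS, rfl, hk⟩
      have Fk' : F (src k') = i := step_fstep hG.1 ⟨k', hk'S, rfl, hk'⟩
      obtain ⟨n, hn⟩ := reach_iterate hG.1 r1
      obtain ⟨m, hm⟩ := reach_iterate hG.1 r2
      have hpn : Function.IsPeriodicPt F (n + 1) i := by
        show F^[n+1] i = i
        rw [Function.iterate_succ_apply', hn, Fk]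
      have hpm : Function.IsPeriodicPt F (m + 1) i := by
        show F^[m+1] i = i
        rw [Function.iterate_succ_apply', hm, Fk']
      set d := Function.minimalPeriod F i with hd
      have hdvdn : d ∣ n + 1 := hpn.minimalPeriod_dvd
      have hdvdm : d ∣ m + 1 := hpm.minimalPeriod_dvd
      have hdpos : 0 < d := hpn.minimalPeriod_pos n.succ_pos
      have hmodn : n % d = d - 1 := by
        obtain ⟨t, ht⟩ := hdvdn
        rcases t with - | s
        · omega
        · rw [Nat.mul_succ] at ht
          have h3 : n = d * s + (d - 1) := by
            generalize d * s = x at ht ⊢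
            omega
          rw [h3, Nat.mul_add_mod]
          exact Nat.mod_eq_of_lt (by omega)
      have hmodm : m % d = d - 1 := by
        obtain ⟨t, ht⟩ := hdvdm
        rcases t with - | s
        · omega
        · rw [Nat.mul_succ] at ht
          have h3 : m = d * s + (d - 1) := by
            generalize d * s = x at ht ⊢
            omega
          rw [h3, Nat.mul_add_mod]
          exact Nat.mod_eq_of_lt (by omega)
      have hsrceq : src k = src k' := by
        rw [← hn, ← hm, ← Function.iterate_mod_minimalPeriod_eq (f := F) (n := n),
          ← Function.iterate_mod_minimalPeriod_eq (f := F) (n := m), ← hd, hmodn, hmodm]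
      exact (hG.1 (src k)).unique ⟨hkS, rfl⟩ ⟨hk'S, hsrceq.symm⟩
    subst hkk
    have hknT : k ∉ T := fun hmem => hT.2.1 k hmem rfl
    have hknT' : k ∉ T' := fun hmem => hT'.2.1 k hmem rfl
    have hTT : T = T' := by
      rw [← Finset.erase_insert hknT, ← Finset.erase_insert hknT', h]
    simp [hTT]
  · rintro ⟨S, hG⟩
    have hcyc : Relation.TransGen (step src tgt S) i i := by
      have h1 : step src tgt S i (fstep (tgt := tgt) hG.1 i) :=
        ⟨fnext hG.1 i, fnext_mem hG.1 i, fnext_src hG.1 i, rfl⟩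
      exact Relation.TransGen.head' h1 (hG.2 _)
    obtain ⟨c, hic, hci⟩ := Relation.TransGen.tail'_iff.1 hcyc
    obtain ⟨k, hkS, hks, hkt⟩ := hci
    have htree : IsInTree src tgt (src k) (S.erase k) :=
      erase_tree hG hkS (hks ▸ hic)
    exact ⟨⟨⟨k, hkt⟩, ⟨S.erase k, htree⟩⟩, by simp [Finset.insert_erase hkS]⟩

theorem count_eq (i : Fin p) :
    Nat.card {k : Fin q // src k = i} * Nat.card {S : Finset (Fin q) // IsInTree src tgt i S}
      = Nat.card (Σ _k : {k : Fin q // tgt k = i},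
          {T : Finset (Fin q) // IsInTree src tgt (src _k.1) T}) := by
  rw [← Nat.card_prod]
  exact Nat.card_congr ((Equiv.ofBijective _ (bij_left i)).trans
    (Equiv.ofBijective _ (bij_right i)).symm)

theorem count_sum (i : Fin p) :
    Nat.card {k : Fin q // src k = i} * Nat.card {S : Finset (Fin q) // IsInTree src tgt i S}
      = ∑ k ∈ Finset.univ.filter (fun k => tgt k = i),
          Nat.card {T : Finset (Fin q) // IsInTree src tgt (src k) T} := by
  classical
  rw [count_eq, Nat.card_eq_fintype_card, Fintype.card_sigma]
  rw [Finset.sum_subtype (p := fun k => tgt k = i) (Finset.univ.filter (fun k => tgt k = i))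
    (by intro x; simp) (fun k => Nat.card {T : Finset (Fin q) // IsInTree src tgt (src k) T})]
  exact Finset.sum_congr rfl fun k _ => (Nat.card_eq_fintype_card).symm

theorem count_sum' (hsimple : Function.Injective fun k => (src k, tgt k)) (i : Fin p) :
    Nat.card {k : Fin q // src k = i} * Nat.card {S : Finset (Fin q) // IsInTree src tgt i S}
      = ∑ j ∈ Finset.univ.filter (fun j => ∃ k, src k = j ∧ tgt k = i),
          Nat.card {T : Finset (Fin q) // IsInTree src tgt j T} := by
  classical
  rw [count_sum]
  refine Finset.sum_bij (fun k _ => src k) ?_ ?_ ?_ ?_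
  · intro k hk
    simp only [Finset.mem_filter, Finset.mem_univ, true_and] at hk ⊢
    exact ⟨k, rfl, hk⟩
  · intro k1 h1 k2 h2 hs
    simp only [Finset.mem_filter, Finset.mem_univ, true_and] at h1 h2
    exact hsimple (by simp [hs, h1, h2] : (src k1, tgt k1) = (src k2, tgt k2))
  · intro j hj
    simp only [Finset.mem_filter, Finset.mem_univ, true_and] at hj
    obtain ⟨k, hks, hkt⟩ := hj
    exact ⟨k, by simp [hkt], hks⟩
  · intro k hk
    rfl

end LapAux

/-- The vector `y` of numbers of incoming directed spanning trees rooted at each vertex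
satisfies `L₂ y = 0`, where `L₂ = D_out - A_vᵀ`. -/
theorem laplacian2_mulVec_tree_counts (p q : ℕ) (src tgt : Fin q → Fin p)
    (hloop : ∀ k, src k ≠ tgt k)
    (hsimple : Function.Injective fun k => (src k, tgt k)) :
    (Dout src - (Av src tgt)ᵀ) *ᵥ
      (fun i => (Nat.card {S : Finset (Fin q) // IsInTree src tgt i S} : ℝ)) = 0 := by
  classical
  funext i
  have key := LapAux.count_sum' (src := src) (tgt := tgt) hsimple i
  have keyR : ((Nat.card {k : Fin q // src k = i} : ℝ)) *
      (Nat.card {S : Finset (Fin q) // IsInTree src tgt i S} : ℝ)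
      = ∑ j ∈ Finset.univ.filter (fun j => ∃ k, src k = j ∧ tgt k = i),
          (Nat.card {T : Finset (Fin q) // IsInTree src tgt j T} : ℝ) := by
    exact_mod_cast congrArg (fun n : ℕ => (n : ℝ)) key
  rw [Nat.card_eq_fintype_card] at keyR
  have hdiag : (∑ j : Fin p,
      Matrix.diagonal (fun v => (Fintype.card {k : Fin q // src k = v} : ℝ)) i j *
        (Nat.card {S : Finset (Fin q) // IsInTree src tgt j S} : ℝ))
      = (Fintype.card {k : Fin q // src k = i} : ℝ) *
        (Nat.card {S : Finset (Fin q) // IsInTree src tgt i S} : ℝ) := by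
    rw [Finset.sum_eq_single i]
    · rw [Matrix.diagonal_apply_eq]
    · intro j _ hj
      rw [Matrix.diagonal_apply_ne' _ hj, zero_mul]
    · simp
  have hadj : (∑ j : Fin p, (Av src tgt)ᵀ i j *
        (Nat.card {S : Finset (Fin q) // IsInTree src tgt j S} : ℝ))
      = ∑ j ∈ Finset.univ.filter (fun j => ∃ k, src k = j ∧ tgt k = i),
          (Nat.card {T : Finset (Fin q) // IsInTree src tgt j T} : ℝ) := by
    rw [Finset.sum_filter]
    refine Finset.sum_congr rfl fun j _ => ?_
    by_cases h : ∃ k, src k = j ∧ tgt k = i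
    · simp [Av, Matrix.transpose_apply, h]
    · simp [Av, Matrix.transpose_apply, h]
  simp only [Matrix.mulVec, dotProduct, Matrix.sub_apply, sub_mul,
    Finset.sum_sub_distrib, Pi.zero_apply, sub_eq_zero, Dout]
  rw [hdiag, hadj, keyR]
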